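/- Let 0 < p ≤ q < ∞, let u be a weight on ℝ₊, let w be a weight on ℝ²₊, and let C > 0. Then ‖f‖_{Λ^q(ℝ²,u)} ≤ C ‖f‖_{Λ₂^p(w)} for all measurable f : ℝ² → ℝ if and only if (∫_0^{|D|} u(θ) dθ)^{1/q} ≤ C (∫_D w(s,t) ds dt)^{1/p} for every decreasing set D ⊂ ℝ²₊. In particular, the best constant in the embedding Λ₂^p(w) ⊂ Λ^q(ℝ²,u) is sup_D (∫_0^{|D|} u)^{1/q} / (∫_D w)^{1/p} over decreasing sets D. -/

import Mathlib

open MeasureTheory ENNReal Set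

noncomputable section

/-- Decreasing rearrangement of an `ℝ≥0∞`-valued function on `ℝ` (w.r.t. Lebesgue measure):
`h*(t) = inf {σ : |{x : σ < h x}| ≤ t}`. -/
def rearrE (h : ℝ → ℝ≥0∞) (t : ℝ) : ℝ≥0∞ :=
  sInf {σ : ℝ≥0∞ | volume {x : ℝ | σ < h x} ≤ ENNReal.ofReal t}

/-- Decreasing rearrangement of a real-valued function on `ℝ`. -/
def rearr (h : ℝ → ℝ) (t : ℝ) : ℝ≥0∞ :=
  rearrE (fun x => ENNReal.ofReal |h x|) t

/-- `f*_y(x,t)`: rearrangement in the second variable. -/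
def rearrY (f : ℝ × ℝ → ℝ) (x t : ℝ) : ℝ≥0∞ := rearr (fun y => f (x, y)) t

/-- `f*_x(s,y)`: rearrangement in the first variable. -/
def rearrX (f : ℝ × ℝ → ℝ) (s y : ℝ) : ℝ≥0∞ := rearr (fun x => f (x, y)) s

/-- The multivariate rearrangement `f*_{yx}(s,t) = (x ↦ f*_y(x,t))*(s)`. -/
def rearrYX (f : ℝ × ℝ → ℝ) (s t : ℝ) : ℝ≥0∞ := rearrE (fun x => rearrY f x t) s

/-- `f**_{yx}(s,t) = (1/s)∫_0^s (x ↦ (1/t)∫_0^t f*_y(x,τ) dτ)*(σ) dσ`. -/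
def starstarYX (f : ℝ × ℝ → ℝ) (s t : ℝ) : ℝ≥0∞ :=
  (ENNReal.ofReal s)⁻¹ *
    ∫⁻ σ in Ioo (0:ℝ) s,
      rearrE (fun x => (ENNReal.ofReal t)⁻¹ * ∫⁻ τ in Ioo (0:ℝ) t, rearrY f x τ) σ

/-- `f**(s,t) = (1/(st))∫_0^s∫_0^t f*_{yx}(σ,τ) dσ dτ`. -/
def starstar (f : ℝ × ℝ → ℝ) (s t : ℝ) : ℝ≥0∞ :=
  (ENNReal.ofReal (s * t))⁻¹ * ∫⁻ σ in Ioo (0:ℝ) s, ∫⁻ τ in Ioo (0:ℝ) t, rearrYX f σ τ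

/-- Decreasing rearrangement of `f : ℝ² → ℝ` w.r.t. two-dimensional Lebesgue measure. -/
def rearr2 (f : ℝ × ℝ → ℝ) (θ : ℝ) : ℝ≥0∞ :=
  sInf {σ : ℝ≥0∞ | volume {z : ℝ × ℝ | σ < ENNReal.ofReal |f z|} ≤ ENNReal.ofReal θ}

/-- A weight on `ℝ₊`: nonnegative and locally integrable. -/
def IsWeight (u : ℝ → ℝ) : Prop :=
  (∀ x, 0 ≤ u x) ∧ LocallyIntegrableOn u (Ioi 0)

/-- A weight on `ℝ²₊`: nonnegative and locally integrable. -/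
def IsWeight2 (w : ℝ × ℝ → ℝ) : Prop :=
  (∀ z, 0 ≤ w z) ∧ LocallyIntegrableOn w (Ioi 0 ×ˢ Ioi 0)

/-- `‖g‖_{Λ^p(u)}` for `g : ℝ → ℝ`. -/
def lamNorm (p : ℝ) (u : ℝ → ℝ) (g : ℝ → ℝ) : ℝ≥0∞ :=
  (∫⁻ t in Ioi (0:ℝ), (rearr g t) ^ p * ENNReal.ofReal (u t)) ^ (1 / p)

/-- `‖f‖_{Λ₂^p(w)}` for `f : ℝ² → ℝ` and a weight `w` on `ℝ²₊`. -/
def lam2Norm (p : ℝ) (w : ℝ × ℝ → ℝ) (f : ℝ × ℝ → ℝ) : ℝ≥0∞ :=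
  (∫⁻ s in Ioi (0:ℝ), ∫⁻ t in Ioi (0:ℝ),
      (rearrYX f s t) ^ p * ENNReal.ofReal (w (s, t))) ^ (1 / p)

/-- `‖f‖_{Λ^p(ℝ²,u)}`, by means of the 2D rearrangement. -/
def lamR2Norm (p : ℝ) (u : ℝ → ℝ) (f : ℝ × ℝ → ℝ) : ℝ≥0∞ :=
  (∫⁻ θ in Ioi (0:ℝ), (rearr2 f θ) ^ p * ENNReal.ofReal (u θ)) ^ (1 / p)

/-- The mixed Lorentz quasinorm `‖f‖_{Λ^p(u)[Λ^p(v)]}`. -/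
def mixedNorm (p : ℝ) (u v : ℝ → ℝ) (f : ℝ × ℝ → ℝ) : ℝ≥0∞ :=
  (∫⁻ s in Ioi (0:ℝ),
      rearrE (fun x => ∫⁻ t in Ioi (0:ℝ), (rearrY f x t) ^ p * ENNReal.ofReal (v t)) s *
        ENNReal.ofReal (u s)) ^ (1 / p)

/-- The mixed Lorentz quasinorm with the order of the variables reversed,
`‖f‖_{Λ^p(v)[Λ^p(u)]}`. -/
def mixedNormRev (p : ℝ) (v u : ℝ → ℝ) (f : ℝ × ℝ → ℝ) : ℝ≥0∞ :=
  (∫⁻ t in Ioi (0:ℝ),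
      rearrE (fun y => ∫⁻ s in Ioi (0:ℝ), (rearrX f s y) ^ p * ENNReal.ofReal (u s)) t *
        ENNReal.ofReal (v t)) ^ (1 / p)

/-- The `B_p` condition for a weight on `ℝ₊`. -/
def Bp (p : ℝ) (v : ℝ → ℝ) : Prop :=
  ∃ C : ℝ, 0 < C ∧ ∀ r : ℝ, 0 < r →
    ENNReal.ofReal (r ^ p) * ∫⁻ x in Ioi r, ENNReal.ofReal (v x / x ^ p) ≤
      ENNReal.ofReal C * ∫⁻ x in Ioo (0:ℝ) r, ENNReal.ofReal (v x)

/-- Two-dimensional Hardy operator acting on `ℝ≥0∞`-valued functions. -/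
def S2E (g : ℝ × ℝ → ℝ≥0∞) (s t : ℝ) : ℝ≥0∞ :=
  (ENNReal.ofReal (s * t))⁻¹ * ∫⁻ σ in Ioo (0:ℝ) s, ∫⁻ τ in Ioo (0:ℝ) t, g (σ, τ)

/-- Nonincreasing in each variable on `ℝ²₊`. -/
def BiAntitone (g : ℝ × ℝ → ℝ≥0∞) : Prop :=
  ∀ s s' t t' : ℝ, 0 < s' → s' ≤ s → 0 < t' → t' ≤ t → g (s, t) ≤ g (s', t')

/-- The class `B_p^{(2)}`: the two-dimensional Hardy operator is bounded on the cone of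
nonnegative functions nonincreasing in each variable in `L^p(ℝ²₊, w)`. -/
def Bp2 (p : ℝ) (w : ℝ × ℝ → ℝ) : Prop :=
  ∃ C : ℝ, 0 < C ∧ ∀ g : ℝ × ℝ → ℝ≥0∞, Measurable g → BiAntitone g →
    (∫⁻ s in Ioi (0:ℝ), ∫⁻ t in Ioi (0:ℝ), (S2E g s t) ^ p * ENNReal.ofReal (w (s, t))) ≤
      ENNReal.ofReal C *
        ∫⁻ s in Ioi (0:ℝ), ∫⁻ t in Ioi (0:ℝ), (g (s, t)) ^ p * ENNReal.ofReal (w (s, t))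

/-- A decreasing subset of `ℝ²₊`. -/
def DecreasingSet (D : Set (ℝ × ℝ)) : Prop :=
  MeasurableSet D ∧ D ⊆ Ioi 0 ×ˢ Ioi 0 ∧
    ∀ s t s' t' : ℝ, (s, t) ∈ D → 0 < s' → s' ≤ s → 0 < t' → t' ≤ t → (s', t') ∈ D

/-- `w(E) = ∫_E w`. -/
def wMeas (w : ℝ × ℝ → ℝ) (E : Set (ℝ × ℝ)) : ℝ≥0∞ := ∫⁻ z in E, ENNReal.ofReal (w z)

/-- `U(m) = ∫_0^m u(θ) dθ`, for `m ∈ [0,∞]`. -/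
def Uof (u : ℝ → ℝ) (m : ℝ≥0∞) : ℝ≥0∞ :=
  ∫⁻ θ in {θ : ℝ | 0 < θ ∧ ENNReal.ofReal θ < m}, ENNReal.ofReal (u θ)

/-- A covering family of `ℝ²₊`: an increasing sequence of decreasing sets covering `ℝ²₊`. -/
def CoveringFamily (D : ℕ → Set (ℝ × ℝ)) : Prop :=
  (∀ k, DecreasingSet (D k)) ∧ Monotone D ∧ (⋃ k, D k) = Ioi 0 ×ˢ Ioi 0

end

noncomputable section

namespace EmbAux

/-- Master characterization of the generalized-inverse rearrangement. -/
theorem l3 {α : Type*} [MeasurableSpace α] (μ : Measure α) (h : α → ℝ≥0∞) (t : ℝ) (l : ℝ≥0∞) :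
    l < sInf {σ : ℝ≥0∞ | μ {x | σ < h x} ≤ ENNReal.ofReal t} ↔
      ENNReal.ofReal t < μ {x | l < h x} := by
  constructor
  · intro H
    by_contra hc
    push_neg at hc
    exact absurd (sInf_le (by exact hc)) (not_le.2 H)
  · intro H
    have hl : l ≠ ∞ := by
      rintro rfl
      simp only [not_top_lt, setOf_false, measure_empty] at H
      exact absurd H (by simp)
    set s : ℕ → Set α := fun n => {x | l + (↑(n + 1) : ℝ≥0∞)⁻¹ < h x} with hs
    have hmono : Monotone s := by
      intro a b hab x hx
      refine lt_of_le_of_lt (add_le_add_right ?_ l) hx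
      exact ENNReal.inv_le_inv.2 (by exact_mod_cast Nat.succ_le_succ hab)
    have hUnion : (⋃ n, s n) = {x | l < h x} := by
      ext x
      simp only [mem_iUnion, mem_setOf_eq, hs]
      constructor
      · rintro ⟨n, hn⟩
        exact lt_of_le_of_lt le_self_add hn
      · intro hx
        have hd : h x - l ≠ 0 := by
          simpa [tsub_eq_zero_iff_le] using not_le.2 hx
        obtain ⟨n, hn⟩ := ENNReal.exists_inv_nat_lt hd
        refine ⟨n, ?_⟩
        have h1 : ((↑(n + 1) : ℝ≥0∞))⁻¹ ≤ ((n : ℝ≥0∞))⁻¹ :=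
          ENNReal.inv_le_inv.2 (by exact_mod_cast Nat.le_succ n)
        have := ENNReal.add_lt_add_left hl (lt_of_le_of_lt h1 hn)
        rwa [add_tsub_cancel_of_le hx.le] at this
    have hsup : ENNReal.ofReal t < ⨆ n, μ (s n) := by
      rw [← Monotone.measure_iUnion hmono, hUnion]; exact H
    obtain ⟨n, hn⟩ := lt_iSup_iff.1 hsup
    have hpos : l < l + (↑(n + 1) : ℝ≥0∞)⁻¹ :=
      ENNReal.lt_add_right hl (by simp)
    refine lt_of_lt_of_le hpos (le_sInf ?_)
    intro σ hσ
    by_contra hσl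
    push_neg at hσl
    have hsub : s n ⊆ {x | σ < h x} := fun x hx => lt_trans hσl hx
    exact absurd (le_trans (measure_mono hsub) hσ) (not_le.2 hn)

theorem rearrE_gt_iff (h : ℝ → ℝ≥0∞) (t : ℝ) (l : ℝ≥0∞) :
    l < rearrE h t ↔ ENNReal.ofReal t < volume {x | l < h x} := l3 _ _ _ _

theorem rearr2_gt_iff (f : ℝ × ℝ → ℝ) (θ : ℝ) (l : ℝ≥0∞) :
    l < rearr2 f θ ↔ ENNReal.ofReal θ < volume {z : ℝ × ℝ | l < ENNReal.ofReal |f z|} :=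
  l3 _ _ _ _

theorem rearrE_anti (h : ℝ → ℝ≥0∞) : Antitone (rearrE h) := by
  intro t t' htt'
  apply sInf_le_sInf
  intro σ hσ
  exact le_trans hσ (ENNReal.ofReal_le_ofReal htt')

theorem rearrE_mono {h h' : ℝ → ℝ≥0∞} (hh : ∀ x, h x ≤ h' x) (t : ℝ) :
    rearrE h t ≤ rearrE h' t := by
  apply sInf_le_sInf
  intro σ hσ
  exact le_trans (measure_mono (fun x hx => lt_of_lt_of_le hx (hh x))) hσ

theorem rearr2_anti (f : ℝ × ℝ → ℝ) : Antitone (rearr2 f) := by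
  intro t t' htt'
  apply sInf_le_sInf
  intro σ hσ
  exact le_trans hσ (ENNReal.ofReal_le_ofReal htt')

/-- `|{t | 0 < t ∧ ofReal t < M}| = M`. -/
theorem vol_pos_ofReal_lt (M : ℝ≥0∞) :
    volume {t : ℝ | 0 < t ∧ ENNReal.ofReal t < M} = M := by
  rcases eq_or_ne M ∞ with rfl | hM
  · have hset : {t : ℝ | 0 < t ∧ ENNReal.ofReal t < ∞} = Ioi 0 := by
      ext t; simp [ofReal_lt_top]
    rw [hset, Real.volume_Ioi]
  · have hset : {t : ℝ | 0 < t ∧ ENNReal.ofReal t < M} = Ioo 0 M.toReal := by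
      ext t
      simp only [mem_setOf_eq, mem_Ioo]
      exact and_congr_right fun ht => ENNReal.ofReal_lt_iff_lt_toReal ht.le hM
    rw [hset, Real.volume_Ioo, sub_zero, ENNReal.ofReal_toReal hM]

theorem measurableSet_ofReal_lt (G : ℝ → ℝ≥0∞) (hG : Measurable G) :
    MeasurableSet {p : ℝ × ℝ | ENNReal.ofReal p.1 < G p.2} := by
  exact measurableSet_lt (ENNReal.measurable_ofReal.comp measurable_fst) (hG.comp measurable_snd)

theorem sInf_indicator {α : Type*} [MeasurableSpace α] (μ : Measure α) (S : Set α) (t : ℝ) :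
    sInf {σ : ℝ≥0∞ | μ {x | σ < S.indicator (fun _ => (1 : ℝ≥0∞)) x} ≤ ENNReal.ofReal t} =
      if ENNReal.ofReal t < μ S then 1 else 0 := by
  set g : α → ℝ≥0∞ := S.indicator (fun _ => (1 : ℝ≥0∞)) with hg
  have hgS : ∀ l : ℝ≥0∞, l < 1 → {x | l < g x} = S := by
    intro l hl
    ext x
    by_cases hx : x ∈ S
    · simp [hg, Set.indicator_of_mem hx, hx, hl]
    · simp [hg, Set.indicator_of_notMem hx, hx]
  split_ifs with hT
  · refine le_antisymm (sInf_le ?_) ?_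
    · show μ {x | 1 < g x} ≤ ENNReal.ofReal t
      have : {x | 1 < g x} = (∅ : Set α) := by
        ext x
        by_cases hx : x ∈ S
        · simp [hg, Set.indicator_of_mem hx]
        · simp [hg, Set.indicator_of_notMem hx]
      simp [this]
    · by_contra hlt
      push_neg at hlt
      have h2 := (l3 μ g t _).2 (by rw [hgS _ hlt]; exact hT)
      exact lt_irrefl _ h2
  · refine le_antisymm (le_of_le_of_eq (sInf_le ?_) rfl) zero_le
    show μ {x | 0 < g x} ≤ ENNReal.ofReal t
    rw [hgS 0 zero_lt_one]
    exact not_lt.1 hT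

theorem ofReal_abs_indicator {β : Type*} (S : Set β) :
    (fun z => ENNReal.ofReal |S.indicator (fun _ => (1 : ℝ)) z|) =
      S.indicator (fun _ => (1 : ℝ≥0∞)) := by
  funext z
  by_cases hz : z ∈ S
  · simp [Set.indicator_of_mem hz]
  · simp [Set.indicator_of_notMem hz]

theorem lint_rpow_Ioo {e : ℝ} (he : 0 < e) {b : ℝ} (hb : 0 ≤ b) :
    ∫⁻ l in Ioo (0 : ℝ) b, ENNReal.ofReal (e * l ^ (e - 1)) = ENNReal.ofReal (b ^ e) := by
  rcases eq_or_lt_of_le hb with rfl | hb0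
  · simp [Real.zero_rpow (ne_of_gt he)]
  · have hint : IntegrableOn (fun l : ℝ => e * l ^ (e - 1)) (Ioo 0 b) := by
      rw [← intervalIntegrable_iff_integrableOn_Ioo_of_le hb0.le]
      exact (intervalIntegral.intervalIntegrable_rpow' (by linarith)).const_mul e
    have hnn : 0 ≤ᵐ[volume.restrict (Ioo (0:ℝ) b)] fun l : ℝ => e * l ^ (e - 1) := by
      refine (ae_restrict_iff' measurableSet_Ioo).2 (Filter.Eventually.of_forall ?_)
      intro l hl
      exact mul_nonneg he.le (Real.rpow_nonneg hl.1.le _)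
    rw [← ofReal_integral_eq_lintegral_ofReal hint hnn]
    congr 1
    rw [← MeasureTheory.integral_Ioc_eq_integral_Ioo, ← intervalIntegral.integral_of_le hb0.le]
    rw [intervalIntegral.integral_const_mul, integral_rpow (Or.inl (by linarith))]
    rw [Real.zero_rpow (by linarith : e - 1 + 1 ≠ 0)]
    rw [sub_add_cancel, sub_zero]
    field_simp

theorem lint_rpow_Ioi {e : ℝ} (he : 0 < e) :
    ∫⁻ l in Ioi (0 : ℝ), ENNReal.ofReal (e * l ^ (e - 1)) = ∞ := by
  by_contra hI
  have hIlt : (∫⁻ l in Ioi (0 : ℝ), ENNReal.ofReal (e * l ^ (e - 1))) < ∞ := lt_top_iff_ne_top.2 hI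
  set I := ∫⁻ l in Ioi (0 : ℝ), ENNReal.ofReal (e * l ^ (e - 1)) with hIdef
  have key : ∀ b : ℝ, 0 ≤ b → ENNReal.ofReal (b ^ e) ≤ I := by
    intro b hb
    rw [← lint_rpow_Ioo he hb]
    exact lintegral_mono_set Ioo_subset_Ioi_self
  have h1 : ∀ᶠ x in Filter.atTop, I.toReal + 1 ≤ x ^ e :=
    (tendsto_rpow_atTop he).eventually_ge_atTop _
  obtain ⟨x, hx1, hx2⟩ := (h1.and (Filter.eventually_ge_atTop (0 : ℝ))).exists
  have h2 : ENNReal.ofReal (I.toReal + 1) ≤ I :=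
    le_trans (ENNReal.ofReal_le_ofReal hx1) (key x hx2)
  have h3 : I.toReal + 1 ≤ I.toReal := by
    have := ENNReal.toReal_mono hI h2
    rwa [ENNReal.toReal_ofReal (by positivity)] at this
  linarith

/-- Pointwise layer-cake formula for `x ^ e` in `ℝ≥0∞`. -/
theorem lc_pt {e : ℝ} (he : 0 < e) (x : ℝ≥0∞) :
    x ^ e = ∫⁻ l in Ioi (0 : ℝ),
      ENNReal.ofReal (e * l ^ (e - 1)) * (if ENNReal.ofReal l < x then 1 else 0) := by
  rcases eq_or_ne x ∞ with rfl | hx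
  · have hcond : ∀ l : ℝ, (if ENNReal.ofReal l < (∞ : ℝ≥0∞) then (1 : ℝ≥0∞) else 0) = 1 :=
      fun l => if_pos ofReal_lt_top
    simp only [hcond, mul_one]
    rw [lint_rpow_Ioi he, ENNReal.top_rpow_of_pos he]
  · set b := x.toReal with hbdef
    have hb0 : 0 ≤ b := ENNReal.toReal_nonneg
    have hcong : ∀ l ∈ Ioi (0 : ℝ),
        ENNReal.ofReal (e * l ^ (e - 1)) * (if ENNReal.ofReal l < x then 1 else 0) =
          (Ioo (0 : ℝ) b).indicator (fun l => ENNReal.ofReal (e * l ^ (e - 1))) l := by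
      intro l hl
      by_cases hlt : ENNReal.ofReal l < x
      · rw [if_pos hlt, mul_one, Set.indicator_of_mem]
        exact ⟨hl, (ENNReal.ofReal_lt_iff_lt_toReal (le_of_lt hl) hx).1 hlt⟩
      · rw [if_neg hlt, mul_zero, Set.indicator_of_notMem]
        intro hmem
        exact hlt ((ENNReal.ofReal_lt_iff_lt_toReal (le_of_lt hl) hx).2 hmem.2)
    rw [setLIntegral_congr_fun measurableSet_Ioi hcong]
    rw [lintegral_indicator measurableSet_Ioo, Measure.restrict_restrict measurableSet_Ioo,
      inter_eq_self_of_subset_left Ioo_subset_Ioi_self, lint_rpow_Ioo he hb0]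
    rw [← ENNReal.ofReal_rpow_of_nonneg hb0 he.le, ENNReal.ofReal_toReal hx]

/-- Weighted layer-cake formula. -/
theorem lcw {α : Type*} [MeasurableSpace α] (μ : Measure α) [SigmaFinite μ] {e : ℝ} (he : 0 < e)
    {F : α → ℝ≥0∞} (hF : Measurable F) {y : α → ℝ≥0∞} (hy : AEMeasurable y μ) :
    ∫⁻ a, F a ^ e * y a ∂μ =
      ∫⁻ l in Ioi (0 : ℝ), ENNReal.ofReal (e * l ^ (e - 1)) *
        ∫⁻ a in {a | ENNReal.ofReal l < F a}, y a ∂μ := by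
  have hstep : ∀ a, F a ^ e * y a = ∫⁻ l in Ioi (0 : ℝ),
      ENNReal.ofReal (e * l ^ (e - 1)) * (if ENNReal.ofReal l < F a then 1 else 0) * y a := by
    intro a
    have hmeas : Measurable fun l : ℝ =>
        ENNReal.ofReal (e * l ^ (e - 1)) * (if ENNReal.ofReal l < F a then 1 else 0) := by
      apply Measurable.mul
      · fun_prop
      · exact Measurable.ite (measurableSet_lt ENNReal.measurable_ofReal measurable_const)
          measurable_const measurable_const
    rw [lintegral_mul_const'' (y a) hmeas.aemeasurable, ← lc_pt he (F a)]
  rw [lintegral_congr hstep]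
  have hswap : AEMeasurable (Function.uncurry fun (a : α) (l : ℝ) =>
      ENNReal.ofReal (e * l ^ (e - 1)) * (if ENNReal.ofReal l < F a then 1 else 0) * y a)
      (μ.prod (volume.restrict (Ioi (0 : ℝ)))) := by
    apply AEMeasurable.mul
    apply AEMeasurable.mul
    · exact Measurable.aemeasurable (by fun_prop)
    · refine Measurable.aemeasurable ?_
      refine Measurable.ite ?_ measurable_const measurable_const
      exact measurableSet_lt (ENNReal.measurable_ofReal.comp measurable_snd)
        (hF.comp measurable_fst)
    · exact hy.comp_quasiMeasurePreserving Measure.quasiMeasurePreserving_fst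
  rw [lintegral_lintegral_swap hswap]
  refine lintegral_congr fun l => ?_
  have h1 : ∀ a, ENNReal.ofReal (e * l ^ (e - 1)) * (if ENNReal.ofReal l < F a then 1 else 0) *
      y a = ENNReal.ofReal (e * l ^ (e - 1)) *
        ({a | ENNReal.ofReal l < F a}.indicator y a) := by
    intro a
    rw [mul_assoc]
    congr 1
    by_cases hlt : ENNReal.ofReal l < F a
    · rw [if_pos hlt, one_mul]
      exact (Set.indicator_of_mem (show a ∈ {a | ENNReal.ofReal l < F a} from hlt) y).symm
    · rw [if_neg hlt, zero_mul]
      exact (Set.indicator_of_notMem (show a ∉ {a | ENNReal.ofReal l < F a} from hlt) y).symm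
  have hsetm : MeasurableSet {a | ENNReal.ofReal l < F a} := hF measurableSet_Ioi
  rw [lintegral_congr h1, lintegral_const_mul'' _ (hy.indicator hsetm)]
  rw [lintegral_indicator hsetm]

/-- The elementary real integral `∫_0^T r e c^{e-1}(T-c) dc = T^{e+1}`. -/
theorem real_int_aux {e : ℝ} (he : 0 < e) {T : ℝ} (hT : 0 < T) {r : ℝ} (hr : r = e + 1) :
    ∫ c in Ioo (0 : ℝ) T, e * c ^ (e - 1) * (r * (T - c)) = T ^ r := by
  have h1 : IntervalIntegrable (fun c : ℝ => c ^ (e - 1)) volume 0 T :=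
    intervalIntegral.intervalIntegrable_rpow' (by linarith)
  have h2 : IntervalIntegrable (fun c : ℝ => c ^ e) volume 0 T :=
    intervalIntegral.intervalIntegrable_rpow' (by linarith)
  have hfun : ∀ c ∈ Ioo (0:ℝ) T, e * c ^ (e - 1) * (r * (T - c)) =
      (e * r * T) * c ^ (e - 1) - (e * r) * c ^ e := by
    intro c hc
    have : c ^ e = c ^ (e - 1) * c := by
      rw [← Real.rpow_add_one (ne_of_gt hc.1)]
      ring_nf
    rw [this]; ring
  rw [setIntegral_congr_fun measurableSet_Ioo hfun]
  rw [← MeasureTheory.integral_Ioc_eq_integral_Ioo, ← intervalIntegral.integral_of_le hT.le]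
  rw [intervalIntegral.integral_sub ((h1.const_mul _)) ((h2.const_mul _))]
  rw [intervalIntegral.integral_const_mul, intervalIntegral.integral_const_mul]
  rw [integral_rpow (Or.inl (by linarith : (-1:ℝ) < e - 1)),
      integral_rpow (Or.inl (by linarith : (-1:ℝ) < e))]
  rw [Real.zero_rpow (by linarith : e - 1 + 1 ≠ 0), Real.zero_rpow (by linarith : e + 1 ≠ 0)]
  have he1 : e - 1 + 1 = e := by ring
  have hTe : T ^ (e + 1) = T ^ e * T := by
    rw [Real.rpow_add_one (ne_of_gt hT)]
  rw [he1, hr, hTe]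
  field_simp
  ring

/-- Hardy-type inequality for antitone `ℝ≥0∞`-valued functions: the key scalar inequality. -/
theorem star_ineq {p q : ℝ} (hp : 0 < p) (hpq : p ≤ q) {W : ℝ → ℝ≥0∞} (hW : Antitone W)
    (hWm : Measurable W) :
    ∫⁻ l in Ioi (0 : ℝ), ENNReal.ofReal (q * l ^ (q - 1)) * W l ^ (q / p) ≤
      (∫⁻ l in Ioi (0 : ℝ), ENNReal.ofReal (p * l ^ (p - 1)) * W l) ^ (q / p) := by
  have hq : 0 < q := lt_of_lt_of_le hp hpq
  set r := q / p with hrdef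
  have hr1 : 1 ≤ r := (one_le_div hp).2 hpq
  have hqpr : q = p * r := by rw [hrdef]; field_simp
  set G : ℝ → ℝ≥0∞ := fun l => ENNReal.ofReal (p * l ^ (p - 1)) * W l with hGdef
  have hGm : Measurable G :=
    ((measurable_const.mul (measurable_id.pow_const _)).ennreal_ofReal).mul hWm
  set I := ∫⁻ l in Ioi (0 : ℝ), G l with hIdef
  rcases eq_or_lt_of_le hr1 with hr1' | hr1'
  · -- r = 1 : equality
    have hqp : q = p := by rw [hqpr, ← hr1', mul_one]
    refine le_of_eq ?_
    rw [← hr1']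
    simp only [ENNReal.rpow_one]
    rw [hqp]
  rcases eq_or_ne I ∞ with hItop | hIfin
  · rw [hItop, ENNReal.top_rpow_of_pos (by linarith)]
    exact le_top
  set e := r - 1 with hedef
  have he0 : 0 < e := by simp only [hedef]; linarith
  have hre : r = e + 1 := by rw [hedef]; ring
  set Φ : ℝ → ℝ≥0∞ := fun l => ∫⁻ s in Ioo (0 : ℝ) l, G s with hPhidef
  have hPhiMono : Monotone Φ := fun a b hab =>
    lintegral_mono_set (Ioo_subset_Ioo le_rfl hab)
  have hPhim : Measurable Φ := hPhiMono.measurable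
  have hPhileI : ∀ l, Φ l ≤ I := fun l => lintegral_mono_set Ioo_subset_Ioi_self
  set ρ := volume.withDensity G with hrho
  have hρIoo : ∀ l : ℝ, ρ (Ioo 0 l) = Φ l := fun l => withDensity_apply _ measurableSet_Ioo
  have hρIoi : ρ (Ioi 0) = I := withDensity_apply _ measurableSet_Ioi
  -- pointwise bound
  have hpt : ∀ l ∈ Ioi (0 : ℝ), ENNReal.ofReal (q * l ^ (q - 1)) * W l ^ r ≤
      Φ l ^ e * (ENNReal.ofReal r * G l) := by
    intro l hl
    have hl0 : (0 : ℝ) < l := hl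
    have hΦlb : ENNReal.ofReal (l ^ p) * W l ≤ Φ l := by
      have hc : ∀ s ∈ Ioo (0 : ℝ) l, ENNReal.ofReal (p * s ^ (p - 1)) * W l ≤ G s :=
        fun s hs => mul_le_mul' le_rfl (hW hs.2.le)
      calc ENNReal.ofReal (l ^ p) * W l
          = (∫⁻ s in Ioo (0:ℝ) l, ENNReal.ofReal (p * s ^ (p - 1))) * W l := by
            rw [lint_rpow_Ioo hp hl0.le]
        _ = ∫⁻ s in Ioo (0:ℝ) l, ENNReal.ofReal (p * s ^ (p - 1)) * W l :=
            (lintegral_mul_const'' _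
              ((measurable_const.mul (measurable_id.pow_const _)).ennreal_ofReal).aemeasurable).symm
        _ ≤ Φ l := setLIntegral_mono hGm hc
    have h1 : W l ^ r = W l ^ e * W l := by
      rw [hre, ENNReal.rpow_add_of_nonneg e 1 he0.le zero_le_one, ENNReal.rpow_one]
    have h2 : ENNReal.ofReal (q * l ^ (q - 1)) =
        ENNReal.ofReal (l ^ (p * e)) * ENNReal.ofReal r * ENNReal.ofReal (p * l ^ (p - 1)) := by
      rw [← ENNReal.ofReal_mul (by positivity), ← ENNReal.ofReal_mul (by positivity)]
      congr 1
      have hsplit : q - 1 = p * e + (p - 1) := by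
        rw [hqpr, hre]; ring
      rw [hsplit, hqpr, Real.rpow_add hl0]
      ring
    have h3 : ENNReal.ofReal (l ^ (p * e)) * W l ^ e ≤ Φ l ^ e := by
      calc ENNReal.ofReal (l ^ (p * e)) * W l ^ e
          = (ENNReal.ofReal (l ^ p) * W l) ^ e := by
            rw [ENNReal.mul_rpow_of_nonneg _ _ he0.le,
              ENNReal.ofReal_rpow_of_nonneg (by positivity) he0.le, ← Real.rpow_mul hl0.le]
        _ ≤ Φ l ^ e := ENNReal.rpow_le_rpow hΦlb he0.le
    rw [h1, h2]
    have hmre : ENNReal.ofReal (l ^ (p * e)) * ENNReal.ofReal r * ENNReal.ofReal (p * l ^ (p - 1)) *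
        (W l ^ e * W l) = (ENNReal.ofReal (l ^ (p * e)) * W l ^ e) *
          (ENNReal.ofReal r * (ENNReal.ofReal (p * l ^ (p - 1)) * W l)) := by ring
    rw [hmre]
    exact mul_le_mul' h3 le_rfl
  have step1 : ∫⁻ l in Ioi (0 : ℝ), ENNReal.ofReal (q * l ^ (q - 1)) * W l ^ r ≤
      ∫⁻ l in Ioi (0 : ℝ), Φ l ^ e * (ENNReal.ofReal r * G l) :=
    setLIntegral_mono ((hPhim.pow_const _).mul (measurable_const.mul hGm)) hpt
  refine le_trans step1 ?_
  have step2 : ∫⁻ l in Ioi (0 : ℝ), Φ l ^ e * (ENNReal.ofReal r * G l) =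
      ∫⁻ c in Ioi (0 : ℝ), ENNReal.ofReal (e * c ^ (e - 1)) *
        ∫⁻ l in {l | ENNReal.ofReal c < Φ l} ∩ Ioi 0, ENNReal.ofReal r * G l := by
    rw [lcw (volume.restrict (Ioi (0:ℝ))) he0 hPhim
      (y := fun l => ENNReal.ofReal r * G l) ((measurable_const.mul hGm)).aemeasurable]
    refine lintegral_congr fun c => ?_
    congr 1
    have hms : MeasurableSet {l : ℝ | ENNReal.ofReal c < Φ l} := hPhim measurableSet_Ioi
    rw [Measure.restrict_restrict hms]
  rw [step2]
  set T := I.toReal with hTdef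
  have hIT : I = ENNReal.ofReal T := (ENNReal.ofReal_toReal hIfin).symm
  -- bound the inner integral
  have hinner : ∀ c ∈ Ioi (0:ℝ),
      ∫⁻ l in {l | ENNReal.ofReal c < Φ l} ∩ Ioi 0, ENNReal.ofReal r * G l ≤
        ENNReal.ofReal r * (I - ENNReal.ofReal c) := by
    intro c hc
    have hc0 : (0:ℝ) < c := hc
    set E := {l | ENNReal.ofReal c < Φ l} ∩ Ioi 0 with hEdef
    have hEm : MeasurableSet E := (hPhim measurableSet_Ioi).inter measurableSet_Ioi
    rw [lintegral_const_mul' _ _ ENNReal.ofReal_ne_top]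
    refine mul_le_mul' le_rfl ?_
    rcases eq_empty_or_nonempty E with hE | hE
    · rw [hE]; simp
    rcases lt_or_ge (ENNReal.ofReal c) I with hcI | hcI
    swap
    · obtain ⟨l0, hl0⟩ := hE
      exact absurd (lt_of_lt_of_le hl0.1 (le_trans (hPhileI l0) hcI)) (lt_irrefl _)
    set K := {l : ℝ | 0 < l ∧ Φ l ≤ ENNReal.ofReal c} with hKdef
    have hKm : MeasurableSet K := by
      have hKeq : K = Ioi 0 ∩ {l | Φ l ≤ ENNReal.ofReal c} := rfl
      rw [hKeq]
      exact measurableSet_Ioi.inter (measurableSet_le hPhim measurable_const)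
    have hKE : K = Ioi 0 \ E := by
      ext l
      constructor
      · rintro ⟨h1, h2⟩
        exact ⟨h1, fun hE => absurd hE.1 (not_lt.2 h2)⟩
      · rintro ⟨h1, h2⟩
        refine ⟨h1, ?_⟩
        by_contra hcon
        push_neg at hcon
        exact h2 ⟨hcon, h1⟩
    have hKne : K.Nonempty := by
      by_contra hKe
      rw [not_nonempty_iff_eq_empty] at hKe
      have hall : ∀ l : ℝ, 0 < l → ENNReal.ofReal c < Φ l := by
        intro l hl
        by_contra hcon
        exact absurd (show l ∈ K from ⟨hl, not_lt.1 hcon⟩) (by rw [hKe]; exact notMem_empty l)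
      have hInter : (⋂ n : ℕ, Ioo (0:ℝ) (1 / (n + 1))) = ∅ := by
        ext x
        simp only [mem_iInter, mem_Ioo, mem_empty_iff_false, iff_false, not_forall, not_and,
          not_lt]
        by_cases hx : 0 < x
        · obtain ⟨n, hn⟩ := exists_nat_one_div_lt hx
          exact ⟨n, fun _ => hn.le⟩
        · exact ⟨0, fun h => absurd h hx⟩
      have hanti : Antitone fun n : ℕ => Ioo (0:ℝ) (1 / (n + 1)) := by
        intro a b hab
        refine Ioo_subset_Ioo le_rfl ?_
        apply one_div_le_one_div_of_le (by positivity)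
        exact_mod_cast add_le_add_left (Nat.cast_le.2 hab) 1
      have hcont := Antitone.measure_iInter (μ := ρ) hanti
        (fun n => measurableSet_Ioo.nullMeasurableSet)
        ⟨0, by rw [hρIoo]; exact ne_top_of_le_ne_top hIfin (hPhileI _)⟩
      rw [hInter] at hcont
      have hle : ENNReal.ofReal c ≤ ρ ∅ := by
        rw [hcont]
        refine le_iInf fun n => ?_
        rw [hρIoo]
        exact (hall _ (by positivity)).le
      rw [measure_empty] at hle
      have := le_antisymm hle zero_le
      rw [ENNReal.ofReal_eq_zero] at this
      exact absurd hc0 (not_lt.2 this)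
    have hKbdd : BddAbove K := by
      by_contra hbd
      have hunion : (⋃ n : ℕ, Ioo (0:ℝ) n) = Ioi 0 := by
        ext x
        simp only [mem_iUnion, mem_Ioo, mem_Ioi]
        constructor
        · rintro ⟨n, hn⟩; exact hn.1
        · intro hx
          obtain ⟨n, hn⟩ := exists_nat_gt x
          exact ⟨n, hx, hn⟩
      have hmono : Monotone fun n : ℕ => Ioo (0:ℝ) (n : ℝ) := fun a b hab =>
        Ioo_subset_Ioo le_rfl (Nat.cast_le.2 hab)
      have hms := Monotone.measure_iUnion (μ := ρ) hmono
      rw [hunion] at hms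
      have hIc : I ≤ ENNReal.ofReal c := by
        rw [← hρIoi, hms]
        refine iSup_le fun n => ?_
        rw [hρIoo]
        obtain ⟨l, hlK, hln⟩ := not_bddAbove_iff.1 hbd (n : ℝ)
        exact le_trans (hPhiMono hln.le) hlK.2
      exact absurd (lt_of_lt_of_le hcI hIc) (lt_irrefl _)
    set b := sSup K with hbdef
    have hb0 : 0 < b := by
      obtain ⟨k, hk⟩ := hKne
      exact lt_of_lt_of_le hk.1 (le_csSup hKbdd hk)
    have hKb : Ioo 0 b ⊆ K := by
      intro l hl
      obtain ⟨k, hkK, hlk⟩ := exists_lt_of_lt_csSup hKne hl.2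
      exact ⟨hl.1, le_trans (hPhiMono hlk.le) hkK.2⟩
    have hEb : ∀ l, b < l → ENNReal.ofReal c < Φ l := by
      intro l hbl
      by_contra hcon
      have : l ∈ K := ⟨lt_trans hb0 hbl, not_lt.1 hcon⟩
      exact absurd (le_csSup hKbdd this) (not_le.2 hbl)
    have hPhib : ENNReal.ofReal c ≤ Φ b := by
      have hIoc : (⋂ n : ℕ, Ioo (0:ℝ) (b + 1 / (n + 1))) = Ioc 0 b := by
        ext x
        simp only [mem_iInter, mem_Ioo, mem_Ioc]
        constructor
        · intro h
          refine ⟨(h 0).1, ?_⟩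
          by_contra hx
          push_neg at hx
          obtain ⟨n, hn⟩ := exists_nat_one_div_lt (sub_pos.2 hx)
          exact absurd ((h n).2) (not_lt.2 (by linarith))
        · intro h n
          exact ⟨h.1, lt_of_le_of_lt h.2 (lt_add_of_pos_right _ (by positivity))⟩
      have hanti : Antitone fun n : ℕ => Ioo (0:ℝ) (b + 1 / (n + 1)) := by
        intro m n hmn
        refine Ioo_subset_Ioo le_rfl (add_le_add_right ?_ b)
        apply one_div_le_one_div_of_le (by positivity)
        exact_mod_cast add_le_add_left (Nat.cast_le.2 hmn) 1
      have hcont := Antitone.measure_iInter (μ := ρ) hanti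
        (fun n => measurableSet_Ioo.nullMeasurableSet)
        ⟨0, by rw [hρIoo]; exact ne_top_of_le_ne_top hIfin (hPhileI _)⟩
      rw [hIoc] at hcont
      have hsing : ρ {b} = 0 := by
        rw [hrho, withDensity_apply _ (measurableSet_singleton b),
          Measure.restrict_eq_zero.2 Real.volume_singleton, lintegral_zero_measure]
      have hIocIoo : ρ (Ioc 0 b) ≤ Φ b := by
        calc ρ (Ioc 0 b) = ρ (Ioo 0 b ∪ {b}) := by rw [Ioo_union_right hb0]
          _ ≤ ρ (Ioo 0 b) + ρ {b} := measure_union_le _ _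
          _ = Φ b := by rw [hsing, add_zero, hρIoo]
      refine le_trans ?_ hIocIoo
      rw [hcont]
      refine le_iInf fun n => ?_
      rw [hρIoo]
      exact (hEb _ (lt_add_of_pos_right _ (by positivity))).le
    have hsub : E ⊆ Ioi 0 := fun l hl => hl.2
    have hsplit : (∫⁻ l in E, G l) + ∫⁻ l in K, G l = I := by
      rw [hKE, ← lintegral_union (measurableSet_Ioi.diff hEm) disjoint_sdiff_right,
        union_diff_cancel hsub]
    have hKfin : (∫⁻ l in K, G l) ≠ ∞ := by
      intro hcon
      rw [hcon, add_top] at hsplit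
      exact hIfin hsplit.symm
    have hKc : ENNReal.ofReal c ≤ ∫⁻ l in K, G l := by
      rw [← withDensity_apply _ hKm]
      exact le_trans hPhib (by rw [← hρIoo]; exact measure_mono hKb)
    calc ∫⁻ l in E, G l = I - ∫⁻ l in K, G l := by
          rw [← hsplit, ENNReal.add_sub_cancel_right hKfin]
      _ ≤ I - ENNReal.ofReal c := tsub_le_tsub_left hKc I
  -- integrate the bound
  have step3 : ∫⁻ c in Ioi (0 : ℝ), ENNReal.ofReal (e * c ^ (e - 1)) *
      ∫⁻ l in {l | ENNReal.ofReal c < Φ l} ∩ Ioi 0, ENNReal.ofReal r * G l ≤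
      ∫⁻ c in Ioi (0 : ℝ), ENNReal.ofReal (e * c ^ (e - 1) * (r * (T - c))) := by
    refine setLIntegral_mono ?_ ?_
    · exact ((measurable_const.mul (measurable_id.pow_const _)).mul
        ((measurable_const.sub measurable_id).const_mul r)).ennreal_ofReal
    · intro c hc
      refine le_trans (mul_le_mul' le_rfl (hinner c hc)) ?_
      have h2 : I - ENNReal.ofReal c = ENNReal.ofReal (T - c) := by
        rw [hIT, ← ENNReal.ofReal_sub T (le_of_lt (mem_Ioi.1 hc))]
      rw [h2, ← ENNReal.ofReal_mul (by linarith : (0:ℝ) ≤ r),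
        ← ENNReal.ofReal_mul (mul_nonneg he0.le (Real.rpow_nonneg (le_of_lt (mem_Ioi.1 hc)) _))]
  refine le_trans step3 ?_
  -- compute the resulting real integral
  rcases eq_or_lt_of_le (ENNReal.toReal_nonneg : (0:ℝ) ≤ T) with hT0 | hT0
  · have hzero : ∀ c ∈ Ioi (0:ℝ),
        ENNReal.ofReal (e * c ^ (e - 1) * (r * (T - c))) = 0 := by
      intro c hc
      rw [ENNReal.ofReal_eq_zero]
      have h1 : 0 ≤ e * c ^ (e - 1) :=
        mul_nonneg he0.le (Real.rpow_nonneg (le_of_lt (mem_Ioi.1 hc)) _)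
      have h2 : r * (T - c) ≤ 0 := by
        have : T - c < 0 := by
          have := mem_Ioi.1 hc
          linarith
        exact mul_nonpos_of_nonneg_of_nonpos (by linarith) this.le
      exact mul_nonpos_of_nonneg_of_nonpos h1 h2
    rw [setLIntegral_congr_fun measurableSet_Ioi hzero]
    simp
  · have hsplitset : Ioo (0:ℝ) T ∪ Ici T ∩ Ioi 0 = Ioi 0 := by
      ext c
      simp only [mem_union, mem_Ioo, mem_inter_iff, mem_Ici, mem_Ioi]
      constructor
      · rintro (⟨h1, _⟩ | ⟨_, h2⟩)
        · exact h1
        · exact h2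
      · intro hc
        rcases lt_or_ge c T with h | h
        · exact Or.inl ⟨hc, h⟩
        · exact Or.inr ⟨h, hc⟩
    have hdis : Disjoint (Ioo (0:ℝ) T) (Ici T ∩ Ioi 0) := by
      rw [Set.disjoint_left]
      intro c h1 h2
      exact absurd h1.2 (not_lt.2 h2.1)
    rw [← hsplitset, lintegral_union (measurableSet_Ici.inter measurableSet_Ioi) hdis]
    have hzero2 : ∫⁻ c in Ici T ∩ Ioi 0, ENNReal.ofReal (e * c ^ (e - 1) * (r * (T - c))) = 0 := by
      have hz : ∀ c ∈ Ici T ∩ Ioi (0:ℝ),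
          ENNReal.ofReal (e * c ^ (e - 1) * (r * (T - c))) = (fun _ => (0:ℝ≥0∞)) c := by
        intro c hc
        rw [ENNReal.ofReal_eq_zero]
        have hTc : T ≤ c := hc.1
        have hc2 : (0:ℝ) < c := hc.2
        have h1 : 0 ≤ e * c ^ (e - 1) :=
          mul_nonneg he0.le (Real.rpow_nonneg hc2.le _)
        have h2 : r * (T - c) ≤ 0 :=
          mul_nonpos_of_nonneg_of_nonpos (by linarith) (by linarith)
        exact mul_nonpos_of_nonneg_of_nonpos h1 h2
      rw [setLIntegral_congr_fun (measurableSet_Ici.inter measurableSet_Ioi) hz]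
      simp
    have hoo : ∫⁻ c in Ioo (0:ℝ) T, ENNReal.ofReal (e * c ^ (e - 1) * (r * (T - c))) =
        ENNReal.ofReal (T ^ r) := by
      have h1 : IntervalIntegrable (fun c : ℝ => c ^ (e - 1)) volume 0 T :=
        intervalIntegral.intervalIntegrable_rpow' (by linarith)
      have h2 : IntervalIntegrable (fun c : ℝ => c ^ e) volume 0 T :=
        intervalIntegral.intervalIntegrable_rpow' (by linarith)
      have h3 : IntegrableOn (fun c : ℝ => (e * r * T) * c ^ (e-1) - (e * r) * c ^ e)
          (Ioo 0 T) := by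
        rw [← intervalIntegrable_iff_integrableOn_Ioo_of_le hT0.le]
        exact (h1.const_mul _).sub (h2.const_mul _)
      have heq : EqOn (fun c : ℝ => (e * r * T) * c ^ (e-1) - (e * r) * c ^ e)
          (fun c : ℝ => e * c ^ (e - 1) * (r * (T - c))) (Ioo 0 T) := by
        intro c hc
        simp only
        have hce : c ^ e = c ^ (e - 1) * c := by
          rw [← Real.rpow_add_one (ne_of_gt hc.1)]
          ring_nf
        rw [hce]; ring
      have hint : IntegrableOn (fun c : ℝ => e * c ^ (e - 1) * (r * (T - c))) (Ioo 0 T) :=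
        h3.congr_fun heq measurableSet_Ioo
      have hnn : 0 ≤ᵐ[volume.restrict (Ioo (0:ℝ) T)]
          fun c : ℝ => e * c ^ (e - 1) * (r * (T - c)) := by
        refine (ae_restrict_iff' measurableSet_Ioo).2 (Filter.Eventually.of_forall ?_)
        intro c hc
        have h1' : 0 ≤ e * c ^ (e - 1) := mul_nonneg he0.le (Real.rpow_nonneg hc.1.le _)
        have h2' : 0 ≤ r * (T - c) := mul_nonneg (by linarith) (by linarith [hc.2])
        exact mul_nonneg h1' h2'
      rw [← ofReal_integral_eq_lintegral_ofReal hint hnn, real_int_aux he0 hT0 hre]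
    rw [hzero2, hoo, add_zero, hIT,
      ← ENNReal.ofReal_rpow_of_nonneg ENNReal.toReal_nonneg (by linarith : (0:ℝ) ≤ r)]


theorem rearrY_gt_iff (f : ℝ × ℝ → ℝ) (x t : ℝ) (l : ℝ≥0∞) :
    l < rearrY f x t ↔ ENNReal.ofReal t < volume {y : ℝ | l < ENNReal.ofReal |f (x, y)|} :=
  l3 _ _ _ _

theorem rearrYX_gt_iff (f : ℝ × ℝ → ℝ) (s t : ℝ) (l : ℝ≥0∞) :
    l < rearrYX f s t ↔ ENNReal.ofReal s < volume {x : ℝ | l < rearrY f x t} :=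
  l3 _ _ _ _

theorem meas_muX {f : ℝ × ℝ → ℝ} (hf : Measurable f) (l : ℝ≥0∞) :
    Measurable fun x : ℝ => volume {y : ℝ | l < ENNReal.ofReal |f (x, y)|} := by
  have hA : MeasurableSet {z : ℝ × ℝ | l < ENNReal.ofReal |f z|} :=
    measurableSet_lt measurable_const hf.abs.ennreal_ofReal
  exact measurable_measure_prodMk_left hA

theorem meas_rearrY {f : ℝ × ℝ → ℝ} (hf : Measurable f) :
    Measurable fun p : ℝ × ℝ => rearrY f p.1 p.2 := by
  refine measurable_of_Ioi fun l => ?_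
  have hset : (fun p : ℝ × ℝ => rearrY f p.1 p.2) ⁻¹' Ioi l =
      {p : ℝ × ℝ | ENNReal.ofReal p.2 < volume {y : ℝ | l < ENNReal.ofReal |f (p.1, y)|}} := by
    ext p
    exact rearrY_gt_iff f p.1 p.2 l
  rw [hset]
  exact measurableSet_lt (ENNReal.measurable_ofReal.comp measurable_snd)
    ((meas_muX hf l).comp measurable_fst)

theorem meas_nu {f : ℝ × ℝ → ℝ} (hf : Measurable f) (l : ℝ≥0∞) :
    Measurable fun t : ℝ => volume {x : ℝ | l < rearrY f x t} := by
  have hS : MeasurableSet {p : ℝ × ℝ | l < rearrY f p.1 p.2} :=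
    measurableSet_lt measurable_const (meas_rearrY hf)
  exact measurable_measure_prodMk_right hS

theorem meas_rearrYX {f : ℝ × ℝ → ℝ} (hf : Measurable f) :
    Measurable fun z : ℝ × ℝ => rearrYX f z.1 z.2 := by
  refine measurable_of_Ioi fun l => ?_
  have hset : (fun z : ℝ × ℝ => rearrYX f z.1 z.2) ⁻¹' Ioi l =
      {z : ℝ × ℝ | ENNReal.ofReal z.1 < volume {x : ℝ | l < rearrY f x z.2}} := by
    ext z
    exact rearrYX_gt_iff f z.1 z.2 l
  rw [hset]
  exact measurableSet_lt (ENNReal.measurable_ofReal.comp measurable_fst)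
    ((meas_nu hf l).comp measurable_snd)

theorem rearrYX_bianti (f : ℝ × ℝ → ℝ) {s s' t t' : ℝ} (hs : s' ≤ s) (ht : t' ≤ t) :
    rearrYX f s t ≤ rearrYX f s' t' := by
  calc rearrYX f s t ≤ rearrYX f s' t := rearrE_anti _ hs
    _ ≤ rearrYX f s' t' := rearrE_mono (fun x => rearrE_anti _ ht) s'

/-- The multivariate rearrangement is equimeasurable with `f`. -/
theorem equimeas {f : ℝ × ℝ → ℝ} (hf : Measurable f) (l : ℝ≥0∞) :
    volume ((Ioi 0 ×ˢ Ioi 0) ∩ {z : ℝ × ℝ | l < rearrYX f z.1 z.2}) =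
      volume {z : ℝ × ℝ | l < ENNReal.ofReal |f z|} := by
  set μx : ℝ → ℝ≥0∞ := fun x => volume {y : ℝ | l < ENNReal.ofReal |f (x, y)|} with hμx
  set ν : ℝ → ℝ≥0∞ := fun t => volume {x : ℝ | l < rearrY f x t} with hν
  have hμxm : Measurable μx := meas_muX hf l
  set D := (Ioi 0 ×ˢ Ioi 0) ∩ {z : ℝ × ℝ | l < rearrYX f z.1 z.2} with hD
  set SS := {p : ℝ × ℝ | 0 < p.1 ∧ ENNReal.ofReal p.1 < μx p.2} with hSS
  set A := {z : ℝ × ℝ | l < ENNReal.ofReal |f z|} with hA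
  have hDm : MeasurableSet D :=
    (measurableSet_Ioi.prod measurableSet_Ioi).inter
      (measurableSet_lt measurable_const (meas_rearrYX hf))
  have hSSm : MeasurableSet SS := by
    have : SS = {p : ℝ × ℝ | 0 < p.1} ∩ {p : ℝ × ℝ | ENNReal.ofReal p.1 < μx p.2} := rfl
    rw [this]
    exact (measurable_fst measurableSet_Ioi).inter
      (measurableSet_lt (ENNReal.measurable_ofReal.comp measurable_fst)
        (hμxm.comp measurable_snd))
  have hAm : MeasurableSet A := measurableSet_lt measurable_const hf.abs.ennreal_ofReal
  -- identification of the y-sections of rearrY level sets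
  have hsec_eq : ∀ t : ℝ, {x : ℝ | l < rearrY f x t} = {x : ℝ | ENNReal.ofReal t < μx x} := by
    intro t
    ext x
    exact rearrY_gt_iff f x t l
  -- volume D = ∫⁻ t, section measure, and sections agree with those of SS
  have hstep1 : volume D = volume SS := by
    rw [show (volume : Measure (ℝ × ℝ)) = (volume : Measure ℝ).prod volume from
      Measure.volume_eq_prod ℝ ℝ]
    rw [Measure.prod_apply_symm hDm, Measure.prod_apply hSSm]
    refine lintegral_congr fun t => ?_
    by_cases ht : 0 < t
    · have h1 : (fun s => (s, t)) ⁻¹' D = {s : ℝ | 0 < s ∧ ENNReal.ofReal s < ν t} := by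
        ext s
        simp only [hD, mem_preimage, mem_inter_iff, mem_prod, mem_Ioi, mem_setOf_eq]
        constructor
        · rintro ⟨⟨hs, _⟩, hR⟩
          exact ⟨hs, (rearrYX_gt_iff f s t l).1 hR⟩
        · rintro ⟨hs, hlt⟩
          exact ⟨⟨hs, ht⟩, (rearrYX_gt_iff f s t l).2 hlt⟩
      have h2 : Prod.mk t ⁻¹' SS = {x : ℝ | ENNReal.ofReal t < μx x} := by
        ext x
        simp only [hSS, mem_preimage, mem_setOf_eq]
        exact ⟨fun h => h.2, fun h => ⟨ht, h⟩⟩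
      rw [h1, h2, vol_pos_ofReal_lt]
      show volume {x : ℝ | l < rearrY f x t} = volume {x : ℝ | ENNReal.ofReal t < μx x}
      rw [hsec_eq t]
    · have h1 : (fun s => (s, t)) ⁻¹' D = (∅ : Set ℝ) := by
        ext s
        simp only [hD, mem_preimage, mem_inter_iff, mem_prod, mem_Ioi, mem_setOf_eq,
          mem_empty_iff_false, iff_false]
        rintro ⟨⟨_, ht'⟩, _⟩
        exact ht ht'
      have h2 : Prod.mk t ⁻¹' SS = (∅ : Set ℝ) := by
        ext x
        simp only [hSS, mem_preimage, mem_setOf_eq, mem_empty_iff_false, iff_false]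
        rintro ⟨ht', _⟩
        exact ht ht'
      rw [h1, h2]
  have hstep2 : volume SS = volume A := by
    rw [show (volume : Measure (ℝ × ℝ)) = (volume : Measure ℝ).prod volume from
      Measure.volume_eq_prod ℝ ℝ]
    rw [Measure.prod_apply_symm hSSm, Measure.prod_apply hAm]
    refine lintegral_congr fun x => ?_
    have h1 : (fun t => (t, x)) ⁻¹' SS = {t : ℝ | 0 < t ∧ ENNReal.ofReal t < μx x} := rfl
    have h2 : Prod.mk x ⁻¹' A = {y : ℝ | l < ENNReal.ofReal |f (x, y)|} := rfl
    rw [h1, h2, vol_pos_ofReal_lt]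
  rw [hstep1, hstep2]

theorem null_ofReal_eq (M : ℝ≥0∞) : volume {y : ℝ | 0 < y ∧ ENNReal.ofReal y = M} = 0 := by
  rcases eq_or_ne M ∞ with rfl | hM
  · have : {y : ℝ | 0 < y ∧ ENNReal.ofReal y = ∞} = ∅ := by
      ext y; simp [ENNReal.ofReal_ne_top]
    rw [this]; simp
  · have hsub : {y : ℝ | 0 < y ∧ ENNReal.ofReal y = M} ⊆ {M.toReal} := by
      rintro y ⟨hy, hyM⟩
      simp only [mem_singleton_iff]
      rw [← hyM, ENNReal.toReal_ofReal hy.le]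
    exact measure_mono_null hsub Real.volume_singleton

theorem downclosed_bounds {S : Set ℝ} (hS : S ⊆ Ioi 0)
    (hdc : ∀ y ∈ S, ∀ y', 0 < y' → y' ≤ y → y' ∈ S) :
    {y : ℝ | 0 < y ∧ ENNReal.ofReal y < volume S} ⊆ S ∧
      S ⊆ {y : ℝ | 0 < y ∧ ENNReal.ofReal y ≤ volume S} := by
  constructor
  · rintro y ⟨hy, hvy⟩
    by_contra hyS
    have hsub : S ⊆ Ioc 0 y := by
      intro z hz
      refine ⟨hS hz, ?_⟩
      by_contra hzy
      push_neg at hzy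
      exact hyS (hdc z hz y hy hzy.le)
    have hle := measure_mono (μ := (volume : Measure ℝ)) hsub
    rw [Real.volume_Ioc, sub_zero] at hle
    exact absurd (lt_of_lt_of_le hvy hle) (lt_irrefl _)
  · intro y hy
    have h1 : Ioc 0 y ⊆ S := fun z hz => hdc y hy z hz.1 hz.2
    refine ⟨hS hy, ?_⟩
    have hle := measure_mono (μ := (volume : Measure ℝ)) h1
    rwa [Real.volume_Ioc, sub_zero] at hle

/-- If every `x`-section of `S \ T` is null, then `S \ T` is null. -/
theorem sections_null_fst {S T : Set (ℝ × ℝ)} (hS : MeasurableSet S) (hT : MeasurableSet T)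
    (h : ∀ x : ℝ, volume (Prod.mk x ⁻¹' (S \ T)) = 0) : volume (S \ T) = 0 := by
  rw [show (volume : Measure (ℝ × ℝ)) = (volume : Measure ℝ).prod volume from
    Measure.volume_eq_prod ℝ ℝ, Measure.prod_apply (hS.diff hT)]
  simp only [h]
  simp

/-- If every `y`-section of `S \ T` is null, then `S \ T` is null. -/
theorem sections_null_snd {S T : Set (ℝ × ℝ)} (hS : MeasurableSet S) (hT : MeasurableSet T)
    (h : ∀ y : ℝ, volume ((fun x => (x, y)) ⁻¹' (S \ T)) = 0) : volume (S \ T) = 0 := by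
  rw [show (volume : Measure (ℝ × ℝ)) = (volume : Measure ℝ).prod volume from
    Measure.volume_eq_prod ℝ ℝ, Measure.prod_apply_symm (hS.diff hT)]
  simp only [h]
  simp

end EmbAux



/-- for `0 < p ≤ q < ∞`, `‖f‖_{Λ^q(ℝ²,u)} ≤ C ‖f‖_{Λ₂^p(w)}` holds for all
measurable `f` iff `(∫_0^{|D|} u)^{1/q} ≤ C (∫_D w)^{1/p}` for all decreasing sets `D`. -/
theorem embedding_lam2_lamR2_iff (p q : ℝ) (hp : 0 < p) (hpq : p ≤ q)
    (u : ℝ → ℝ) (hu : IsWeight u) (w : ℝ × ℝ → ℝ) (hw : IsWeight2 w)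
    (C : ℝ) (hC : 0 < C) :
    (∀ f : ℝ × ℝ → ℝ, Measurable f →
        lamR2Norm q u f ≤ ENNReal.ofReal C * lam2Norm p w f) ↔
      ∀ D : Set (ℝ × ℝ), DecreasingSet D →
        (Uof u (volume D)) ^ (1 / q) ≤ ENNReal.ofReal C * (wMeas w D) ^ (1 / p) := by
  open EmbAux in
  have hq : 0 < q := lt_of_lt_of_le hp hpq
  constructor
  · -- FORWARD: test on indicators of decreasing sets
    intro hemb D hD
    obtain ⟨hDm, hDsub, hDdec⟩ := hD
    set f : ℝ × ℝ → ℝ := D.indicator (fun _ => 1) with hfdef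
    have hfm : Measurable f := measurable_const.indicator hDm
    have hofabs : ∀ z : ℝ × ℝ, ENNReal.ofReal |f z| = D.indicator (fun _ => (1:ℝ≥0∞)) z := by
      intro z
      rw [hfdef]
      exact congrFun (EmbAux.ofReal_abs_indicator D) z
    -- value of rearr2
    have hr2 : ∀ θ : ℝ, rearr2 f θ = if ENNReal.ofReal θ < volume D then 1 else 0 := by
      intro θ
      show sInf {σ : ℝ≥0∞ | volume {z : ℝ × ℝ | σ < ENNReal.ofReal |f z|} ≤ ENNReal.ofReal θ} = _
      simp only [hofabs]
      exact EmbAux.sInf_indicator volume D θ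
    -- lamR2Norm of f
    have hLnorm : lamR2Norm q u f = (Uof u (volume D)) ^ (1/q) := by
      show (∫⁻ θ in Ioi (0:ℝ), (rearr2 f θ)^q * ENNReal.ofReal (u θ))^(1/q) = _
      congr 1
      have hms : MeasurableSet {θ : ℝ | ENNReal.ofReal θ < volume D} :=
        measurableSet_lt ENNReal.measurable_ofReal measurable_const
      have hcong : ∀ θ ∈ Ioi (0:ℝ), (rearr2 f θ)^q * ENNReal.ofReal (u θ) =
          ({θ : ℝ | ENNReal.ofReal θ < volume D}).indicator (fun θ => ENNReal.ofReal (u θ)) θ := by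
        intro θ _
        rw [hr2 θ]
        by_cases hc : ENNReal.ofReal θ < volume D
        · rw [if_pos hc, ENNReal.one_rpow, one_mul,
            Set.indicator_of_mem (show θ ∈ {θ : ℝ | ENNReal.ofReal θ < volume D} from hc)]
        · rw [if_neg hc, ENNReal.zero_rpow_of_pos hq, zero_mul,
            Set.indicator_of_notMem (show θ ∉ {θ : ℝ | ENNReal.ofReal θ < volume D} from hc)]
      rw [setLIntegral_congr_fun measurableSet_Ioi hcong,
        lintegral_indicator hms, Measure.restrict_restrict hms]
      have hsets : {θ : ℝ | ENNReal.ofReal θ < volume D} ∩ Ioi 0 =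
          {θ : ℝ | 0 < θ ∧ ENNReal.ofReal θ < volume D} := by
        ext θ
        simp only [mem_inter_iff, mem_setOf_eq, mem_Ioi]
        exact and_comm
      rw [hsets]
      rfl
    -- x-section measure of D
    set mD : ℝ → ℝ≥0∞ := fun x => volume (Prod.mk x ⁻¹' D) with hmD
    have hmDm : Measurable mD := measurable_measure_prodMk_left hDm
    have hsec_empty : ∀ x : ℝ, x ≤ 0 → Prod.mk x ⁻¹' D = ∅ := by
      intro x hx
      ext y
      simp only [mem_preimage, mem_empty_iff_false, iff_false]
      intro hy
      exact absurd (hDsub hy).1 (not_lt.2 hx)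
    have hsec_sub : ∀ x : ℝ, Prod.mk x ⁻¹' D ⊆ Ioi 0 := fun x y hy => (hDsub hy).2
    have hsec_dc : ∀ x : ℝ, 0 < x → ∀ y ∈ Prod.mk x ⁻¹' D, ∀ y', 0 < y' → y' ≤ y →
        y' ∈ Prod.mk x ⁻¹' D := by
      intro x hx y hy y' hy' hy'y
      exact hDdec x y x y' hy hx le_rfl hy' hy'y
    -- value of rearrY
    have hrY : ∀ x t : ℝ, rearrY f x t = if ENNReal.ofReal t < mD x then 1 else 0 := by
      intro x t
      show sInf {σ : ℝ≥0∞ | volume {y : ℝ | σ < ENNReal.ofReal |f (x, y)|} ≤ ENNReal.ofReal t} = _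
      have hpoint : ∀ y : ℝ, ENNReal.ofReal |f (x, y)| =
          (Prod.mk x ⁻¹' D).indicator (fun _ => (1:ℝ≥0∞)) y := by
        intro y
        rw [hofabs (x, y)]
        by_cases hy : (x, y) ∈ D
        · rw [Set.indicator_of_mem hy,
            Set.indicator_of_mem (show y ∈ Prod.mk x ⁻¹' D from hy)]
        · rw [Set.indicator_of_notMem hy,
            Set.indicator_of_notMem (show y ∉ Prod.mk x ⁻¹' D from hy)]
      simp only [hpoint]
      exact EmbAux.sInf_indicator volume _ t
    set ψ : ℝ → ℝ≥0∞ := fun t => volume {x : ℝ | ENNReal.ofReal t < mD x} with hψ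
    have hψm : Measurable ψ := by
      have hsetm : MeasurableSet {pp : ℝ × ℝ | ENNReal.ofReal pp.2 < mD pp.1} :=
        measurableSet_lt (ENNReal.measurable_ofReal.comp measurable_snd)
          (hmDm.comp measurable_fst)
      exact measurable_measure_prodMk_right hsetm
    have hmD0 : ∀ x : ℝ, x ≤ 0 → mD x = 0 := by
      intro x hxle
      show volume (Prod.mk x ⁻¹' D) = 0
      rw [hsec_empty x hxle]
      simp
    have hAt_sub : ∀ t : ℝ, {x : ℝ | ENNReal.ofReal t < mD x} ⊆ Ioi 0 := by
      intro t x hx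
      have hx' : ENNReal.ofReal t < mD x := hx
      by_contra hx0
      have hxle : x ≤ 0 := not_lt.1 hx0
      rw [hmD0 x hxle] at hx'
      exact absurd hx' (by simp)
    have hAt_dc : ∀ t : ℝ, ∀ x ∈ {x : ℝ | ENNReal.ofReal t < mD x}, ∀ x', 0 < x' → x' ≤ x →
        x' ∈ {x : ℝ | ENNReal.ofReal t < mD x} := by
      intro t x hx x' hx' hx'x
      have hx'' : ENNReal.ofReal t < mD x := hx
      have hxpos : 0 < x := hAt_sub t hx
      have hsub : Prod.mk x ⁻¹' D ⊆ Prod.mk x' ⁻¹' D := by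
        intro y hy
        exact hDdec x y x' y hy hx' hx'x (hsec_sub x hy) le_rfl
      show ENNReal.ofReal t < mD x'
      exact lt_of_lt_of_le hx'' (measure_mono hsub)
    -- value of rearrYX
    have hrYX : ∀ s t : ℝ, rearrYX f s t = if ENNReal.ofReal s < ψ t then 1 else 0 := by
      intro s t
      show sInf {σ : ℝ≥0∞ | volume {x : ℝ | σ < rearrY f x t} ≤ ENNReal.ofReal s} = _
      have hpoint : ∀ x : ℝ, rearrY f x t =
          ({x : ℝ | ENNReal.ofReal t < mD x}).indicator (fun _ => (1:ℝ≥0∞)) x := by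
        intro x
        rw [hrY x t]
        by_cases hx : ENNReal.ofReal t < mD x
        · rw [if_pos hx,
            Set.indicator_of_mem (show x ∈ {x : ℝ | ENNReal.ofReal t < mD x} from hx)]
        · rw [if_neg hx,
            Set.indicator_of_notMem (show x ∉ {x : ℝ | ENNReal.ofReal t < mD x} from hx)]
      simp only [hpoint]
      exact EmbAux.sInf_indicator volume _ s
    -- lam2Norm of f
    have hPnorm : lam2Norm p w f = (wMeas w D)^(1/p) := by
      show (∫⁻ s in Ioi (0:ℝ), ∫⁻ t in Ioi (0:ℝ),
        (rearrYX f s t)^p * ENNReal.ofReal (w (s, t)))^(1/p) = _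
      congr 1
      set D' : Set (ℝ × ℝ) := {z : ℝ × ℝ | ENNReal.ofReal z.1 < ψ z.2} with hD'
      have hD'm : MeasurableSet D' :=
        measurableSet_lt (ENNReal.measurable_ofReal.comp measurable_fst)
          (hψm.comp measurable_snd)
      have hwae : AEMeasurable (fun z => ENNReal.ofReal (w z))
          ((volume : Measure (ℝ × ℝ)).restrict (Ioi 0 ×ˢ Ioi 0)) :=
        (hw.2.aestronglyMeasurable.aemeasurable).ennreal_ofReal
      have hae2 : AEMeasurable (fun z : ℝ × ℝ => (rearrYX f z.1 z.2)^p * ENNReal.ofReal (w z))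
          ((volume : Measure (ℝ × ℝ)).restrict (Ioi 0 ×ˢ Ioi 0)) :=
        (((EmbAux.meas_rearrYX hfm).pow_const p).aemeasurable).mul hwae
      have hae3 : AEMeasurable (fun z : ℝ × ℝ => (rearrYX f z.1 z.2)^p * ENNReal.ofReal (w z))
          ((volume.restrict (Ioi (0:ℝ))).prod (volume.restrict (Ioi (0:ℝ)))) := by
        rw [Measure.prod_restrict, ← Measure.volume_eq_prod]
        exact hae2
      have hiter : ∫⁻ s in Ioi (0:ℝ), ∫⁻ t in Ioi (0:ℝ),
          (rearrYX f s t)^p * ENNReal.ofReal (w (s, t)) =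
          ∫⁻ z in Ioi 0 ×ˢ Ioi 0, (rearrYX f z.1 z.2)^p * ENNReal.ofReal (w z) ∂volume := by
        rw [← lintegral_prod _ hae3, Measure.prod_restrict, ← Measure.volume_eq_prod]
      rw [hiter]
      have hcong : ∀ z ∈ (Ioi 0 ×ˢ Ioi 0 : Set (ℝ × ℝ)),
          (rearrYX f z.1 z.2)^p * ENNReal.ofReal (w z) =
            D'.indicator (fun z => ENNReal.ofReal (w z)) z := by
        intro z _
        rw [hrYX z.1 z.2]
        by_cases hc : ENNReal.ofReal z.1 < ψ z.2
        · rw [if_pos hc, ENNReal.one_rpow, one_mul,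
            Set.indicator_of_mem (show z ∈ D' from hc)]
        · rw [if_neg hc, ENNReal.zero_rpow_of_pos hp, zero_mul,
            Set.indicator_of_notMem (show z ∉ D' from hc)]
      rw [setLIntegral_congr_fun (measurableSet_Ioi.prod measurableSet_Ioi) hcong,
        lintegral_indicator hD'm, Measure.restrict_restrict hD'm]
      -- now the set equality up to measure zero
      set D₁ : Set (ℝ × ℝ) := {z : ℝ × ℝ | 0 < z.1 ∧ 0 < z.2 ∧ ENNReal.ofReal z.2 < mD z.1}
        with hD₁
      have hD₁m : MeasurableSet D₁ := by
        have heq : D₁ = {z : ℝ × ℝ | 0 < z.1} ∩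
            ({z : ℝ × ℝ | 0 < z.2} ∩ {z : ℝ × ℝ | ENNReal.ofReal z.2 < mD z.1}) := rfl
        rw [heq]
        exact (measurable_fst (measurableSet_Ioi (a := (0:ℝ)))).inter
          ((measurable_snd (measurableSet_Ioi (a := (0:ℝ)))).inter
            (measurableSet_lt (ENNReal.measurable_ofReal.comp measurable_snd)
              (hmDm.comp measurable_fst)))
      have null1a : volume (D \ D₁) = 0 := by
        refine EmbAux.sections_null_fst hDm hD₁m fun x => ?_
        rcases le_or_gt x 0 with hx | hx
        · refine measure_mono_null (fun y hy => ?_) (measure_empty (μ := (volume : Measure ℝ)))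
          have := hy.1
          rw [show Prod.mk x ⁻¹' (D \ D₁) = (Prod.mk x ⁻¹' D) \ (Prod.mk x ⁻¹' D₁) from rfl] at hy
          rw [hsec_empty x hx] at hy
          exact hy.1
        · refine measure_mono_null ?_ (EmbAux.null_ofReal_eq (mD x))
          intro y hy
          have hyD : (x, y) ∈ D := hy.1
          have hynD₁ : (x, y) ∉ D₁ := hy.2
          have hy0 : 0 < y := (hDsub hyD).2
          have hle : ENNReal.ofReal y ≤ mD x :=
            ((EmbAux.downclosed_bounds (hsec_sub x) (hsec_dc x hx)).2 hyD).2
          refine ⟨hy0, ?_⟩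
          rcases eq_or_lt_of_le hle with heq | hlt
          · exact heq
          · exact absurd (show (x, y) ∈ D₁ from ⟨hx, hy0, hlt⟩) hynD₁
      have null1b : volume (D₁ \ D) = 0 := by
        refine EmbAux.sections_null_fst hD₁m hDm fun x => ?_
        refine measure_mono_null (fun y hy => ?_) (measure_empty (μ := (volume : Measure ℝ)))
        have hyD₁ : (x, y) ∈ D₁ := hy.1
        have hynD : (x, y) ∉ D := hy.2
        obtain ⟨hx, hy0, hlt⟩ := hyD₁
        exact hynD ((EmbAux.downclosed_bounds (hsec_sub x) (hsec_dc x hx)).1 ⟨hy0, hlt⟩)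
      have null2a : volume (D₁ \ (D' ∩ Ioi 0 ×ˢ Ioi 0)) = 0 := by
        refine EmbAux.sections_null_snd hD₁m (hD'm.inter (measurableSet_Ioi.prod
          measurableSet_Ioi)) fun t => ?_
        rcases le_or_gt t 0 with ht | ht
        · refine measure_mono_null (fun x hx => ?_) (measure_empty (μ := (volume : Measure ℝ)))
          exact absurd hx.1.2.1 (not_lt.2 ht)
        · refine measure_mono_null ?_ (EmbAux.null_ofReal_eq (ψ t))
          intro x hx
          obtain ⟨⟨hx0, _, hmem⟩, hnot⟩ := hx
          have hle : ENNReal.ofReal x ≤ ψ t :=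
            ((EmbAux.downclosed_bounds (hAt_sub t) (hAt_dc t)).2 hmem).2
          refine ⟨hx0, ?_⟩
          rcases eq_or_lt_of_le hle with heq | hlt
          · exact heq
          · exact absurd (show (x, t) ∈ D' ∩ Ioi 0 ×ˢ Ioi 0 from ⟨hlt, hx0, ht⟩) hnot
      have null2b : volume ((D' ∩ Ioi 0 ×ˢ Ioi 0) \ D₁) = 0 := by
        refine EmbAux.sections_null_snd (hD'm.inter (measurableSet_Ioi.prod
          measurableSet_Ioi)) hD₁m fun t => ?_
        refine measure_mono_null (fun x hx => ?_) (measure_empty (μ := (volume : Measure ℝ)))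
        obtain ⟨⟨hlt, hx0, ht⟩, hnot⟩ := hx
        have hmem : x ∈ {x : ℝ | ENNReal.ofReal t < mD x} :=
          (EmbAux.downclosed_bounds (hAt_sub t) (hAt_dc t)).1 ⟨hx0, hlt⟩
        exact hnot ⟨hx0, ht, hmem⟩
      have hae_set : (D' ∩ Ioi 0 ×ˢ Ioi 0 : Set (ℝ × ℝ)) =ᵐ[volume] D := by
        rw [MeasureTheory.ae_eq_set]
        constructor
        · refine measure_mono_null (fun z hz => ?_)
            (measure_union_null null2b null1b)
          by_cases hzD₁ : z ∈ D₁
          · exact Or.inr ⟨hzD₁, hz.2⟩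
          · exact Or.inl ⟨hz.1, hzD₁⟩
        · refine measure_mono_null (fun z hz => ?_)
            (measure_union_null null1a null2a)
          by_cases hzD₁ : z ∈ D₁
          · exact Or.inr ⟨hzD₁, hz.2⟩
          · exact Or.inl ⟨hz.1, hzD₁⟩
      rw [Measure.restrict_congr_set hae_set]
      rfl
    have := hemb f hfm
    rw [hLnorm, hPnorm] at this
    exact this
  · -- REVERSE
    intro hcond f hfm
    have huae : AEMeasurable (fun θ => ENNReal.ofReal (u θ)) (volume.restrict (Ioi (0:ℝ))) :=
      (hu.2.aestronglyMeasurable.aemeasurable).ennreal_ofReal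
    have hwae : AEMeasurable (fun z => ENNReal.ofReal (w z))
        ((volume : Measure (ℝ × ℝ)).restrict (Ioi 0 ×ˢ Ioi 0)) :=
      (hw.2.aestronglyMeasurable.aemeasurable).ennreal_ofReal
    have hRm : Measurable fun z : ℝ × ℝ => rearrYX f z.1 z.2 := EmbAux.meas_rearrYX hfm
    have hr2m : Measurable (rearr2 f) := (EmbAux.rearr2_anti f).measurable
    set Wfun : ℝ → ℝ≥0∞ := fun l =>
      wMeas w ((Ioi 0 ×ˢ Ioi 0) ∩ {z : ℝ × ℝ | ENNReal.ofReal l < rearrYX f z.1 z.2}) with hWfun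
    have hWanti : Antitone Wfun := by
      intro l l' hll'
      refine lintegral_mono_set (inter_subset_inter_right _ fun z hz => ?_)
      exact lt_of_le_of_lt (ENNReal.ofReal_le_ofReal hll') hz
    have hWm : Measurable Wfun := hWanti.measurable
    -- LHS rewrite
    have hL : ∫⁻ θ in Ioi (0:ℝ), (rearr2 f θ)^q * ENNReal.ofReal (u θ) =
        ∫⁻ l in Ioi (0:ℝ), ENNReal.ofReal (q * l ^ (q - 1)) *
          Uof u (volume ((Ioi 0 ×ˢ Ioi 0) ∩
            {z : ℝ × ℝ | ENNReal.ofReal l < rearrYX f z.1 z.2})) := by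
      rw [EmbAux.lcw (volume.restrict (Ioi (0:ℝ))) hq hr2m huae]
      refine lintegral_congr fun l => ?_
      congr 1
      have hms : MeasurableSet {θ : ℝ | ENNReal.ofReal l < rearr2 f θ} :=
        hr2m measurableSet_Ioi
      rw [Measure.restrict_restrict hms]
      have hsets : {θ : ℝ | ENNReal.ofReal l < rearr2 f θ} ∩ Ioi 0 =
          {θ : ℝ | 0 < θ ∧ ENNReal.ofReal θ < volume ((Ioi 0 ×ˢ Ioi 0) ∩
            {z : ℝ × ℝ | ENNReal.ofReal l < rearrYX f z.1 z.2})} := by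
        ext θ
        simp only [mem_inter_iff, mem_setOf_eq, mem_Ioi]
        rw [EmbAux.equimeas hfm (ENNReal.ofReal l)]
        constructor
        · rintro ⟨h1, h2⟩
          exact ⟨h2, (EmbAux.rearr2_gt_iff f θ _).1 h1⟩
        · rintro ⟨h1, h2⟩
          exact ⟨(EmbAux.rearr2_gt_iff f θ _).2 h2, h1⟩
      rw [hsets]
      rfl
    -- RHS rewrite
    have hP : ∫⁻ s in Ioi (0:ℝ), ∫⁻ t in Ioi (0:ℝ),
        (rearrYX f s t)^p * ENNReal.ofReal (w (s, t)) =
        ∫⁻ l in Ioi (0:ℝ), ENNReal.ofReal (p * l ^ (p - 1)) * Wfun l := by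
      have hae3 : AEMeasurable (fun z : ℝ × ℝ => (rearrYX f z.1 z.2)^p * ENNReal.ofReal (w z))
          ((volume.restrict (Ioi (0:ℝ))).prod (volume.restrict (Ioi (0:ℝ)))) := by
        rw [Measure.prod_restrict, ← Measure.volume_eq_prod]
        exact ((hRm.pow_const p).aemeasurable).mul hwae
      have hiter : ∫⁻ s in Ioi (0:ℝ), ∫⁻ t in Ioi (0:ℝ),
          (rearrYX f s t)^p * ENNReal.ofReal (w (s, t)) =
          ∫⁻ z in Ioi 0 ×ˢ Ioi 0, (rearrYX f z.1 z.2)^p * ENNReal.ofReal (w z) ∂volume := by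
        rw [← lintegral_prod _ hae3, Measure.prod_restrict, ← Measure.volume_eq_prod]
      rw [hiter, EmbAux.lcw ((volume : Measure (ℝ × ℝ)).restrict (Ioi 0 ×ˢ Ioi 0)) hp hRm hwae]
      refine lintegral_congr fun l => ?_
      congr 1
      have hms : MeasurableSet {z : ℝ × ℝ | ENNReal.ofReal l < rearrYX f z.1 z.2} :=
        hRm measurableSet_Ioi
      rw [Measure.restrict_restrict hms, Set.inter_comm]
      rfl
    -- hypothesis applied to the level sets
    have hUW : ∀ l : ℝ, Uof u (volume ((Ioi 0 ×ˢ Ioi 0) ∩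
        {z : ℝ × ℝ | ENNReal.ofReal l < rearrYX f z.1 z.2})) ≤
          (ENNReal.ofReal C)^q * (Wfun l)^(q/p) := by
      intro l
      have hDdec : DecreasingSet ((Ioi 0 ×ˢ Ioi 0) ∩
          {z : ℝ × ℝ | ENNReal.ofReal l < rearrYX f z.1 z.2}) := by
        refine ⟨(measurableSet_Ioi.prod measurableSet_Ioi).inter (hRm measurableSet_Ioi),
          inter_subset_left, ?_⟩
        intro s t s' t' hmem hs' hss' ht' htt'
        refine ⟨⟨hs', ht'⟩, ?_⟩
        exact lt_of_lt_of_le hmem.2 (EmbAux.rearrYX_bianti f hss' htt')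
      have h1 := hcond _ hDdec
      have h2 := ENNReal.rpow_le_rpow h1 hq.le
      rw [← ENNReal.rpow_mul, one_div_mul_cancel (ne_of_gt hq), ENNReal.rpow_one] at h2
      rw [ENNReal.mul_rpow_of_nonneg _ _ hq.le, ← ENNReal.rpow_mul] at h2
      have hexp : 1 / p * q = q / p := by ring
      rwa [hexp] at h2
    -- main chain
    have hchain : ∫⁻ l in Ioi (0:ℝ), ENNReal.ofReal (q * l ^ (q - 1)) *
        Uof u (volume ((Ioi 0 ×ˢ Ioi 0) ∩
          {z : ℝ × ℝ | ENNReal.ofReal l < rearrYX f z.1 z.2})) ≤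
        (ENNReal.ofReal C)^q *
          (∫⁻ l in Ioi (0:ℝ), ENNReal.ofReal (p * l ^ (p - 1)) * Wfun l)^(q/p) := by
      have hCq_ne : (ENNReal.ofReal C)^q ≠ ∞ :=
        ENNReal.rpow_ne_top_of_nonneg hq.le ENNReal.ofReal_ne_top
      calc ∫⁻ l in Ioi (0:ℝ), ENNReal.ofReal (q * l ^ (q - 1)) *
          Uof u (volume ((Ioi 0 ×ˢ Ioi 0) ∩
            {z : ℝ × ℝ | ENNReal.ofReal l < rearrYX f z.1 z.2}))
          ≤ ∫⁻ l in Ioi (0:ℝ), (ENNReal.ofReal C)^q *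
              (ENNReal.ofReal (q * l ^ (q - 1)) * (Wfun l)^(q/p)) := by
            refine setLIntegral_mono (measurable_const.mul
              (((measurable_const.mul (measurable_id.pow_const _)).ennreal_ofReal).mul
                (hWm.pow_const _))) fun l _ => ?_
            calc ENNReal.ofReal (q * l ^ (q - 1)) *
                Uof u (volume ((Ioi 0 ×ˢ Ioi 0) ∩
                  {z : ℝ × ℝ | ENNReal.ofReal l < rearrYX f z.1 z.2}))
                ≤ ENNReal.ofReal (q * l ^ (q - 1)) *
                    ((ENNReal.ofReal C)^q * (Wfun l)^(q/p)) := mul_le_mul' le_rfl (hUW l)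
              _ = (ENNReal.ofReal C)^q *
                    (ENNReal.ofReal (q * l ^ (q - 1)) * (Wfun l)^(q/p)) := by ring
        _ = (ENNReal.ofReal C)^q * ∫⁻ l in Ioi (0:ℝ),
              ENNReal.ofReal (q * l ^ (q - 1)) * (Wfun l)^(q/p) := by
            rw [lintegral_const_mul' _ _ hCq_ne]
        _ ≤ (ENNReal.ofReal C)^q *
              (∫⁻ l in Ioi (0:ℝ), ENNReal.ofReal (p * l ^ (p - 1)) * Wfun l)^(q/p) :=
            mul_le_mul' le_rfl (EmbAux.star_ineq hp hpq hWanti hWm)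
    -- conclude
    show (∫⁻ θ in Ioi (0:ℝ), (rearr2 f θ)^q * ENNReal.ofReal (u θ))^(1/q) ≤
      ENNReal.ofReal C * (∫⁻ s in Ioi (0:ℝ), ∫⁻ t in Ioi (0:ℝ),
        (rearrYX f s t)^p * ENNReal.ofReal (w (s, t)))^(1/p)
    rw [hL, hP]
    have hfinal := ENNReal.rpow_le_rpow hchain (by positivity : (0:ℝ) ≤ 1/q)
    rw [ENNReal.mul_rpow_of_nonneg _ _ (by positivity : (0:ℝ) ≤ 1/q),
      ← ENNReal.rpow_mul, ← ENNReal.rpow_mul] at hfinal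
    have he1 : q * (1/q) = 1 := by field_simp
    have he2 : q / p * (1/q) = 1/p := by field_simp
    rw [he1, he2, ENNReal.rpow_one] at hfinal
    exact hfinal
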